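/- arXiv:1207.3514 — 2 statements merged into one kernel-verified Lean document; each statement's English description precedes it below -/
import Mathlib

section
/- Let G ⇒ M be a topological groupoid, h : G → ℝᴺ a continuous groupoid homomorphism, and define H : G × [0,1] → ℝᴺ by H(γ,t) = t·h(γ). Let G_H = (G × [0,1])_H be the semi-direct groupoid of the product groupoid G × [0,1] (product of G with the space [0,1]) by H, with units M × [0,1] × ℝᴺ. Then the map θ : G_h × (0,1] → (G_H)|_{(0,1]} given by θ(γ, X, ε) = (γ, ε, ε·X) (and on units θ₀(x, X, ε) = (x, ε, ε·X)) is an isomorphism of topological groupoids, with inverse θ⁻¹(γ, ε, X) = (γ, X/ε, ε). -/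
/-- An (algebraic) groupoid over a set of units: `mul γ η` is only meaningful
when `s γ = r η` (it may take junk values otherwise). -/
structure Gpd (A M : Type*) where
  s : A → M
  r : A → M
  mul : A → A → A
  unit : M → A
  inv : A → A
  s_unit : ∀ m, s (unit m) = m
  r_unit : ∀ m, r (unit m) = m
  s_mul : ∀ γ η, s γ = r η → s (mul γ η) = s η
  r_mul : ∀ γ η, s γ = r η → r (mul γ η) = r γ
  mul_assoc' : ∀ γ η δ, s γ = r η → s η = r δ → mul (mul γ η) δ = mul γ (mul η δ)
  unit_mul : ∀ γ, mul (unit (r γ)) γ = γ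
  mul_unit : ∀ γ, mul γ (unit (s γ)) = γ
  s_inv : ∀ γ, s (inv γ) = r γ
  r_inv : ∀ γ, r (inv γ) = s γ
  mul_inv : ∀ γ, mul γ (inv γ) = unit (r γ)
  inv_mul : ∀ γ, mul (inv γ) γ = unit (s γ)

/-- A groupoid homomorphism with values in an (additive) abelian group. -/
def IsGpdHom {A M V : Type*} [AddCommGroup V] (G : Gpd A M) (h : A → V) : Prop :=
  ∀ γ η, G.s γ = G.r η → h (G.mul γ η) = h γ + h η


open Filter Topology

/-- for a topological groupoid `G ⇒ M` with continuous homomorphism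
`h : G → ℝᴺ` and `H(γ,t) = t·h(γ)`, the map `θ(γ, X, ε) = (γ, ε, ε·X)` (with
`θ₀(x, X, ε) = (x, ε, ε·X)` on units) is an isomorphism of topological groupoids
from `G_h × (0,1]` onto `(G_H)|_{(0,1]}`, with inverse `θ⁻¹(γ, ε, X) = (γ, X/ε, ε)`:
it is a homeomorphism on arrows, a homeomorphism on units, and it intertwines the
source, range and product maps of the two semi-direct groupoids. -/
theorem stmt2 {A M : Type*} [TopologicalSpace A] [TopologicalSpace M] (N : ℕ)
    (G : Gpd A M) (hscont : Continuous G.s) (hrcont : Continuous G.r)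
    (h : A → (Fin N → ℝ)) (hcont : Continuous h) (hh : IsGpdHom G h) :
    -- `E = (0,1]`, arrows of `G_h × (0,1]` are `A × ℝᴺ × E`,
    -- arrows of `(G_H)|_{(0,1]}` are `A × E × ℝᴺ`
    ∀ (θ : A × (Fin N → ℝ) × (Set.Ioc (0:ℝ) 1) → A × (Set.Ioc (0:ℝ) 1) × (Fin N → ℝ))
      (θ₀ : M × (Fin N → ℝ) × (Set.Ioc (0:ℝ) 1) → M × (Set.Ioc (0:ℝ) 1) × (Fin N → ℝ))
      (θinv : A × (Set.Ioc (0:ℝ) 1) × (Fin N → ℝ) → A × (Fin N → ℝ) × (Set.Ioc (0:ℝ) 1)),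
      (∀ p, θ p = (p.1, p.2.2, (p.2.2 : ℝ) • p.2.1)) →
      (∀ u, θ₀ u = (u.1, u.2.2, (u.2.2 : ℝ) • u.2.1)) →
      (∀ q, θinv q = (q.1, (q.2.1 : ℝ)⁻¹ • q.2.2, q.2.1)) →
      -- θ is a homeomorphism of the arrow spaces (θ₀ likewise on units):
      (Continuous θ ∧ Continuous θinv ∧ Continuous θ₀ ∧
        Function.LeftInverse θinv θ ∧ Function.RightInverse θinv θ) ∧
      -- θ intertwines the source maps:  s_h(γ,X,ε) = (s γ, X + h γ, ε),
      --                                 s_H(γ,ε,Y) = (s γ, ε, Y + ε·h γ)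
      (∀ p : A × (Fin N → ℝ) × (Set.Ioc (0:ℝ) 1),
        (G.s (θ p).1, (θ p).2.1, (θ p).2.2 + ((θ p).2.1 : ℝ) • h (θ p).1)
          = θ₀ (G.s p.1, p.2.1 + h p.1, p.2.2)) ∧
      -- θ intertwines the range maps:
      (∀ p : A × (Fin N → ℝ) × (Set.Ioc (0:ℝ) 1),
        (G.r (θ p).1, (θ p).2.1, (θ p).2.2) = θ₀ (G.r p.1, p.2.1, p.2.2)) ∧
      -- θ intertwines the products:
      --   in G_h × (0,1] : (γ,X,ε)·(η, X + h γ, ε) = (γ·η, X, ε)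
      --   in (G_H)|(0,1] : (γ,ε,Y)·(η, ε, Y + ε·h γ) = (γ·η, ε, Y)
      (∀ (γ η : A) (X : Fin N → ℝ) (ε : Set.Ioc (0:ℝ) 1), G.s γ = G.r η →
        θ (G.mul γ η, X, ε) = (G.mul γ η, ε, (ε : ℝ) • X) ∧
        θ (γ, X, ε) = (γ, ε, (ε : ℝ) • X) ∧
        θ (η, X + h γ, ε) = (η, ε, (ε : ℝ) • X + (ε : ℝ) • h γ)) := by
  intro θ θ₀ θinv hθ hθ₀ hθinv
  have hεc : Continuous fun ε : Set.Ioc (0:ℝ) 1 => (ε : ℝ) :=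
    continuous_subtype_val
  refine ⟨⟨?_, ?_, ?_, ?_, ?_⟩, ?_, ?_, ?_⟩
  · have : θ = fun p => (p.1, p.2.2, (p.2.2 : ℝ) • p.2.1) := funext hθ
    rw [this]
    exact continuous_fst.prodMk ((continuous_snd.comp continuous_snd).prodMk
      (((hεc.comp (continuous_snd.comp continuous_snd))).smul
        (continuous_fst.comp continuous_snd)))
  · have : θinv = fun q => (q.1, (q.2.1 : ℝ)⁻¹ • q.2.2, q.2.1) := funext hθinv
    rw [this]
    refine continuous_fst.prodMk (Continuous.prodMk ?_
      (continuous_fst.comp continuous_snd))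
    exact ((hεc.comp (continuous_fst.comp continuous_snd)).inv₀
      (fun q => ne_of_gt q.2.1.2.1)).smul (continuous_snd.comp continuous_snd)
  · have : θ₀ = fun u => (u.1, u.2.2, (u.2.2 : ℝ) • u.2.1) := funext hθ₀
    rw [this]
    exact continuous_fst.prodMk ((continuous_snd.comp continuous_snd).prodMk
      (((hεc.comp (continuous_snd.comp continuous_snd))).smul
        (continuous_fst.comp continuous_snd)))
  · intro p
    rw [hθ, hθinv]
    simp only
    rw [smul_smul, inv_mul_cancel₀ (ne_of_gt p.2.2.2.1), one_smul]
  · intro q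
    rw [hθinv, hθ]
    simp only
    rw [smul_smul, mul_inv_cancel₀ (ne_of_gt q.2.1.2.1), one_smul]
  · intro p
    rw [hθ, hθ₀]
    simp [smul_add]
  · intro p
    rw [hθ, hθ₀]
  · intro γ η X ε _
    refine ⟨by rw [hθ], by rw [hθ], ?_⟩
    rw [hθ]
    simp [smul_add]
end

section
/- With X, ρ, i_∂, h as above, the map (r,s) : Γ(X) × ℝᴺ → (X × ℝᴺ) × (X × ℝᴺ), given by (x,y,X₀) ↦ ((x,X₀), (y, X₀ + (i_∂(x) − i_∂(y), log(ρ(x)/ρ(y))))) on X̊ × X̊ × ℝᴺ and (x,y,α,X₀) ↦ ((x,X₀), (y, X₀ + (i_∂(x) − i_∂(y), α))) on ∂X × ∂X × ℝ × ℝᴺ, is a closed map. Consequently the semi-direct groupoid Γ(X)_h is a free and proper groupoid. -/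
/-- The b-groupoid of `(X, ρ)` with its topology as a subspace of `X × X × ℝ`
(this subspace topology realizes the b-topology described in the paper:
`(xₙ,yₙ) → (x,y,α)` iff `xₙ → x`, `yₙ → y` and `log(ρ xₙ / ρ yₙ) → α`). -/
def bGpdSet {X : Type*} (ρ : X → ℝ) : Set (X × X × ℝ) :=
  {p | ρ p.1 = Real.exp p.2.2 * ρ p.2.1}

/-- `h(x,y,α) = (i_∂ x − i_∂ y, α)`. -/
def bHom {X : Type*} (ρ : X → ℝ) {K : ℕ} (ib : X → (Fin K → ℝ)) :
    bGpdSet ρ → (Fin K → ℝ) × ℝ :=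
  fun p => (ib p.1.1 - ib p.1.2.1, p.1.2.2)

/-- The map `(r,s)` of the semi-direct groupoid `Γ(X)_h`:
`(γ, X₀) ↦ ((r γ, X₀), (s γ, X₀ + h γ))`. -/
def bRS {X : Type*} (ρ : X → ℝ) {K : ℕ} (ib : X → (Fin K → ℝ)) :
    bGpdSet ρ × ((Fin K → ℝ) × ℝ) →
      (X × ((Fin K → ℝ) × ℝ)) × (X × ((Fin K → ℝ) × ℝ)) :=
  fun p => ((p.1.1.1, p.2), (p.1.1.2.1, p.2 + bHom ρ ib p.1))

section Aux

variable {X : Type*} [TopologicalSpace X] [T2Space X] {K : ℕ}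

/-- The extension of `bRS` to the whole ambient product space. -/
def bRSFull (ib : X → (Fin K → ℝ)) :
    ((X × X × ℝ) × ((Fin K → ℝ) × ℝ)) →
      (X × ((Fin K → ℝ) × ℝ)) × (X × ((Fin K → ℝ) × ℝ)) :=
  fun p => ((p.1.1, p.2), (p.1.2.1, p.2 + (ib p.1.1 - ib p.1.2.1, p.1.2.2)))

/-- A continuous left inverse of `bRSFull`. -/
def bRSRetr (ib : X → (Fin K → ℝ)) :
    (X × ((Fin K → ℝ) × ℝ)) × (X × ((Fin K → ℝ) × ℝ)) →
      ((X × X × ℝ) × ((Fin K → ℝ) × ℝ)) :=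
  fun z => ((z.1.1, z.2.1, z.2.2.2 - z.1.2.2), z.1.2)

lemma bRSRetr_leftInverse (ib : X → (Fin K → ℝ)) :
    Function.LeftInverse (bRSRetr ib) (bRSFull ib) := by
  rintro ⟨⟨x, y, a⟩, X₀⟩
  simp [bRSRetr, bRSFull]

lemma bRSFull_isClosedEmbedding (ib : X → (Fin K → ℝ)) (hibc : Continuous ib) :
    Topology.IsClosedEmbedding (bRSFull ib) := by
  haveI h1 : T2Space (X × (Fin K → ℝ) × ℝ) := Prod.t2Space
  haveI h2 : T2Space (X × (Fin K → ℝ)) := Prod.t2Space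
  haveI : T2Space ((X × (Fin K → ℝ) × ℝ) × X × (Fin K → ℝ) × ℝ) := Prod.t2Space
  have hF : Continuous (bRSFull ib) := by
    apply Continuous.prodMk
    · exact (continuous_fst.comp continuous_fst).prodMk continuous_snd
    · refine ((continuous_fst.comp (continuous_snd.comp continuous_fst)).prodMk ?_)
      exact continuous_snd.add (((hibc.comp (continuous_fst.comp continuous_fst)).sub
        (hibc.comp ((continuous_fst.comp continuous_snd).comp continuous_fst))).prodMk
        ((continuous_snd.comp (continuous_snd.comp continuous_fst))))
  have hG : Continuous (bRSRetr (X := X) (K := K) ib) := by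
    apply Continuous.prodMk
    · exact (continuous_fst.comp continuous_fst).prodMk
        ((continuous_fst.comp continuous_snd).prodMk
          (((continuous_snd.comp (continuous_snd.comp continuous_snd))).sub
            (continuous_snd.comp (continuous_snd.comp continuous_fst))))
    · exact continuous_snd.comp continuous_fst
  exact (bRSRetr_leftInverse ib).isClosedEmbedding hG hF

end Aux

/-- for a compact manifold with boundary `X` with defining function
`ρ` and embedding `i_∂ : X → ℝ^{N-1}`, the map `(r,s)` of `Γ(X)_h` is a closed
map; consequently (the stabilizers being trivial) the semi-direct groupoid
`Γ(X)_h` is free and proper. -/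
theorem stmt6 {X : Type*} [TopologicalSpace X] [CompactSpace X] [T2Space X]
    (ρ : X → ℝ) (hρc : Continuous ρ) (hρ : ∀ x, 0 ≤ ρ x)
    {K : ℕ} (ib : X → (Fin K → ℝ)) (hibc : Continuous ib)
    (hibi : Function.Injective ib) :
    -- (r,s) is a closed map
    IsClosedMap (bRS ρ ib) ∧
    -- freeness: trivial isotropy groups
    (∀ p : bGpdSet ρ, bHom ρ ib p = 0 → p.1.1 = p.1.2.1 →
      p.1 = (p.1.1, p.1.1, 0)) ∧
    -- properness of the groupoid: (r,s) is a proper map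
    IsProperMap (bRS ρ ib) := by
  -- the inclusion of the domain into the ambient space
  have hGclosed : IsClosed (bGpdSet ρ) := by
    apply isClosed_eq (hρc.comp continuous_fst)
    exact ((Real.continuous_exp.comp (continuous_snd.comp continuous_snd)).mul
      (hρc.comp (continuous_fst.comp continuous_snd)))
  have hincl : Topology.IsClosedEmbedding
      (Prod.map (Subtype.val : bGpdSet ρ → X × X × ℝ)
        (id : ((Fin K → ℝ) × ℝ) → _)) := by
    refine ⟨Topology.IsEmbedding.prodMap Topology.IsEmbedding.subtypeVal
      Topology.IsEmbedding.id, ?_⟩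
    rw [Set.range_prodMap, Subtype.range_val, Set.range_id]
    exact hGclosed.prod isClosed_univ
  have hcomp : bRS ρ ib = (bRSFull ib) ∘
      (Prod.map (Subtype.val : bGpdSet ρ → X × X × ℝ) id) := by
    funext p
    rfl
  have hce : Topology.IsClosedEmbedding (bRS ρ ib) := by
    rw [hcomp]
    exact (bRSFull_isClosedEmbedding ib hibc).comp hincl
  refine ⟨hce.isClosedMap, ?_, hce.isProperMap⟩
  rintro ⟨⟨x, y, a⟩, hp⟩ h0 hxy
  simp only [bHom, Prod.mk_eq_zero] at h0
  have hyx : x = y := hxy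
  simp [← hyx, h0.2]
end
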